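/- Classification of equilibria: assume ρ_C, ρ_L, α, τ_C > 0 and ρ_C ≠ α. A point (C,L,T) ∈ ℝ³ satisfies the equilibrium equations ρ_C(T+L+C)C − C/τ_C − αC² = 0, ρ_L L − αLC = 0, −αTC = 0 if and only if it has one of the following three forms: (i) E₁ = (0, 0, T*) for some T* ∈ ℝ; (ii) E₂ = (ρ_L/α, 1/(ρ_C τ_C) + ρ_L/ρ_C − ρ_L/α, 0); (iii) E₃ = (1/(τ_C(ρ_C − α)), 0, 0). -/

import Mathlib

/-- Classification of the equilibria of the CAR-T/leukemia/normal
T-cell model (with `g = 0`): a point `(C, L, T)` solves the equilibrium equations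
iff it is of the form `E₁ = (0, 0, T*)`, `E₂ = (ρ_L/α, 1/(ρ_C τ_C) + ρ_L/ρ_C − ρ_L/α, 0)`
or `E₃ = (1/(τ_C(ρ_C − α)), 0, 0)`. -/
theorem carT_model_equilibria_classification
    (ρC ρL α τC : ℝ) (hρC : 0 < ρC) (hρL : 0 < ρL) (hα : 0 < α) (hτC : 0 < τC)
    (hne : ρC ≠ α) (C L T : ℝ) :
    (ρC * (T + L + C) * C - C / τC - α * C ^ 2 = 0 ∧
     ρL * L - α * L * C = 0 ∧
     -(α * T * C) = 0) ↔
    ((∃ Tstar : ℝ, (C, L, T) = (0, 0, Tstar)) ∨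
     (C, L, T) = (ρL / α, 1 / (ρC * τC) + ρL / ρC - ρL / α, 0) ∨
     (C, L, T) = (1 / (τC * (ρC - α)), 0, 0)) := by
  have hα' := hα.ne'
  have hρC' := hρC.ne'
  have hρL' := hρL.ne'
  have hτC' := hτC.ne'
  have hsub : ρC - α ≠ 0 := sub_ne_zero.mpr hne
  constructor
  · rintro ⟨h1, h2, h3⟩
    by_cases hC : C = 0
    · exact Or.inl ⟨T, by
        have hL : L = 0 := by
          have := h2; rw [hC] at this
          have : ρL * L = 0 := by linarith
          exact (mul_eq_zero.mp this).resolve_left hρL'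
        simp [hC, hL]⟩
    · -- C ≠ 0 ⇒ T = 0
      have hT : T = 0 := by
        rcases mul_eq_zero.mp (by linarith : α * T * C = 0) with h | h
        · rcases mul_eq_zero.mp h with h | h
          · exact absurd h hα'
          · exact h
        · exact absurd h hC
      -- first equation divided by C
      have h1' : ρC * (T + L + C) - 1 / τC - α * C = 0 := by
        have := mul_right_cancel₀ hC (by
          field_simp at h1 ⊢
          ring_nf at h1 ⊢
          have := (mul_eq_zero.mp (show C * (-1 + C * ρC * τC - C * τC * α + ρC * T * τC + ρC * L * τC) = 0 by linear_combination h1)).resolve_left hC; linarith : (ρC * (T + L + C) - 1 / τC - α * C) * C = 0 * C)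
        linarith
      rcases mul_eq_zero.mp (by linarith [mul_comm ρL L] :
          L * (ρL - α * C) = 0) with hL | hLC
      · -- L = 0, T = 0 ⇒ E₃
        right; right
        have hC3 : C = 1 / (τC * (ρC - α)) := by
          rw [hT, hL] at h1'
          field_simp at h1' ⊢
          ring_nf at h1' ⊢
          nlinarith [h1']
        simp [hC3, hL, hT]
      · -- C = ρL / α ⇒ E₂
        right; left
        have hC2 : C = ρL / α := by
          field_simp
          linarith
        have hL2 : L = 1 / (ρC * τC) + ρL / ρC - ρL / α := by
          rw [hT, hC2] at h1'
          field_simp at h1' ⊢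
          ring_nf at h1' ⊢
          nlinarith [h1']
        simp [hC2, hL2, hT]
  · rintro (⟨Tstar, h⟩ | h | h) <;> simp only [Prod.mk.injEq] at h <;>
      obtain ⟨hC, hL, hT⟩ := h
    · refine ⟨by simp [hC], by simp [hC, hL], by simp [hC]⟩
    · subst hC hL hT
      refine ⟨by field_simp; ring, by field_simp; ring, by ring⟩
    · subst hC hL hT
      refine ⟨by field_simp; ring, by ring, by ring⟩
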